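/- Let F be a multigraph with t vertices, let k ≥ 1 be an integer, and let H = F^{2k-1}. Let K, δ > 0 and let G be a graph with maximum degree at most Kδ that does not contain H as a subgraph. Then for every vertex v of G and every 1 ≤ ℓ ≤ k, the auxiliary graph 𝒢_ℓ(v) (with richness parameters k, h = |V(H)|, K, δ) contains no clique on t vertices. -/

import Mathlib

open SimpleGraph

variable {V : Type*} [Fintype V] [DecidableEq V]

/-- The restriction of `p : ℕ → V` to `[0, ℓ]` is a path in `G`: consecutive vertices are
adjacent and all vertices `p 0, …, p ℓ` are distinct. -/
def PathSeq (G : SimpleGraph V) (ℓ : ℕ) (p : ℕ → V) : Prop :=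
  (∀ i, i < ℓ → G.Adj (p i) (p (i + 1))) ∧
  ∀ i j, i < j → j ≤ ℓ → p i ≠ p j

/-- `p` is padded beyond index `ℓ`; used so that each finite sequence corresponds to a
unique function `ℕ → V` when counting. -/
def PadSeq (ℓ : ℕ) (p : ℕ → V) : Prop := ∀ i, ℓ ≤ i → p i = p ℓ

/-- `f(ℓ, L) = L^(5^ℓ)`. -/
noncomputable def fBound (ℓ : ℕ) (L : ℝ) : ℝ := L ^ (5 ^ ℓ)

/-- The recursive notion of an `L`-good path of length `ℓ` (as a sequence `p 0, …, p ℓ`):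
`p` is a path, every proper subpath is `L`-good, and the number of `L`-admissible paths of
length `ℓ` from `p 0` to `p ℓ` is at most `f(ℓ, L)`. -/
def Good (G : SimpleGraph V) (L : ℝ) (ℓ : ℕ) (p : ℕ → V) : Prop :=
  (PathSeq G ℓ p ∧
    ∀ i j, i < j → j ≤ ℓ → ¬(i = 0 ∧ j = ℓ) → Good G L (j - i) (fun a => p (i + a))) ∧
  (Set.ncard {q : ℕ → V | q 0 = p 0 ∧ q ℓ = p ℓ ∧ PadSeq ℓ q ∧ PathSeq G ℓ q ∧
      ∀ i j, i < j → j ≤ ℓ → ¬(i = 0 ∧ j = ℓ) → Good G L (j - i) (fun a => q (i + a))} : ℝ)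
    ≤ fBound ℓ L
termination_by ℓ
decreasing_by all_goals omega

/-- `L`-admissible: a path all of whose proper subpaths are `L`-good. -/
def Admissible (G : SimpleGraph V) (L : ℝ) (ℓ : ℕ) (p : ℕ → V) : Prop :=
  PathSeq G ℓ p ∧
    ∀ i j, i < j → j ≤ ℓ → ¬(i = 0 ∧ j = ℓ) → Good G L (j - i) (fun a => p (i + a))

/-- There exist `N` pairwise internally vertex-disjoint paths of length `m` from `x` to `y`. -/
def ManyDisjointPaths (G : SimpleGraph V) (m : ℕ) (x y : V) (N : ℕ) : Prop :=
  ∃ P : Fin N → (ℕ → V),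
    (∀ a, PathSeq G m (P a) ∧ P a 0 = x ∧ P a m = y) ∧
    (∀ a b, a ≠ b → ∃ i, i ≤ m ∧ P a i ≠ P b i) ∧
    ∀ a b, a ≠ b → ∀ i j, 0 < i → i < m → 0 < j → j < m → P a i ≠ P b j

/-- A pair `(x, y)` of distinct vertices is `(i,j)`-rich (with parameters `k`, `h`, `K`, `δ`). -/
def Rich (G : SimpleGraph V) (k h : ℕ) (K δ : ℝ) (i j : ℕ) (x y : V) : Prop :=
  x ≠ y ∧
  ((2 * (i + j) * h * (2 * k + 1) + 2 * (i + 1) * j : ℕ) : ℝ) *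
      (K * δ) ^ ((i : ℤ) + (j : ℤ) - 1) <
    (Set.ncard {PQ : (ℕ → V) × (ℕ → V) |
      PathSeq G i PQ.1 ∧ PQ.1 0 = x ∧ PadSeq i PQ.1 ∧
      PathSeq G j PQ.2 ∧ PQ.2 0 = y ∧ PadSeq j PQ.2 ∧
      ManyDisjointPaths G (2 * k - i - j) (PQ.1 i) (PQ.2 j) ((h + 2) * (2 * k + 1) + 1)} : ℝ)

/-- `(x, y)` is an `(ℓ, L)`-bad pair: there is an `L`-admissible but not `L`-good path of
length `ℓ` from `x` to `y`. -/
def Bad (G : SimpleGraph V) (L : ℝ) (ℓ : ℕ) (x y : V) : Prop :=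
  ∃ p : ℕ → V, p 0 = x ∧ p ℓ = y ∧ Admissible G L ℓ p ∧ ¬ Good G L ℓ p

/-- `G` contains the `(s-1)`-subdivision of the multigraph on `Fin t` with multiplicity
function `m` as a subgraph: each parallel edge between `a < b` is replaced by a path of
length `s`, these paths being pairwise internally vertex-disjoint, with internal vertices
distinct from all branch vertices. -/
def ContainsMultiSubdiv (G : SimpleGraph V) (t : ℕ) (m : Fin t → Fin t → ℕ) (s : ℕ) : Prop :=
  ∃ (φ : Fin t → V) (π : (a : Fin t) → (b : Fin t) → Fin (m a b) → (ℕ → V)),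
    Function.Injective φ ∧
    (∀ a b, a < b → ∀ c, PathSeq G s (π a b c) ∧ π a b c 0 = φ a ∧ π a b c s = φ b) ∧
    (∀ a b, a < b → ∀ c, ∀ i, 0 < i → i < s → ∀ d, π a b c i ≠ φ d) ∧
    (∀ a b, a < b → ∀ a' b', a' < b' → ∀ (c : Fin (m a b)) (c' : Fin (m a' b')),
      (a, b, (c : ℕ)) ≠ (a', b', (c' : ℕ)) →
      ∀ i i', 0 < i → i < s → 0 < i' → i' < s → π a b c i ≠ π a' b' c' i')

/-- The number of vertices of `H = F^{2k-1}` where `F` is the multigraph on `Fin t` with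
multiplicity function `m`: the `t` branch vertices plus `2k - 1` internal vertices for each
edge (counted with multiplicity). -/
def nH (t k : ℕ) (m : Fin t → Fin t → ℕ) : ℕ :=
  t + (2 * k - 1) * ∑ p : Fin t × Fin t, if p.1 < p.2 then m p.1 p.2 else 0

/-- The minimum degree of `G`. -/
noncomputable def minDeg (G : SimpleGraph V) : ℕ :=
  sInf {d | ∃ v, (G.neighborSet v).ncard = d}

/-- The maximum degree of `G`. -/
noncomputable def maxDeg (G : SimpleGraph V) : ℕ :=
  sSup {d | ∃ v, (G.neighborSet v).ncard = d}

/-- Adjacency in the auxiliary graph `𝒢_ℓ(v)`: the `2k+1` vertices `u 0 = v, u 1, …, u k,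
u' 1, …, u' k` are all distinct and there exist `0 ≤ i, j ≤ k-1` such that the pair
`(u ℓ, u' ℓ)` is `(i,j)`-rich (symmetrised so that this defines a graph). -/
def AuxAdj (G : SimpleGraph V) (k h : ℕ) (K δ : ℝ) (ℓ : Fin (k + 1))
    (u u' : Fin (k + 1) → V) : Prop :=
  Function.Injective u ∧ Function.Injective u' ∧
  (∀ a b : Fin (k + 1), a ≠ 0 → b ≠ 0 → u a ≠ u' b) ∧
  ∃ i j : ℕ, i < k ∧ j < k ∧
    (Rich G k h K δ i j (u ℓ) (u' ℓ) ∨ Rich G k h K δ i j (u' ℓ) (u ℓ))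

/-- `r` satisfies the `k`-colour Ramsey property for `t`: every `k`-colouring of the edges of
the complete graph on `r` vertices contains a monochromatic complete graph on `t` vertices. -/
def RamseyProp (k t r : ℕ) : Prop :=
  ∀ χ : Fin r → Fin r → Fin k, (∀ a b, χ a b = χ b a) →
    ∃ (col : Fin k) (s : Finset (Fin r)), s.card = t ∧
      ∀ a ∈ s, ∀ b ∈ s, a ≠ b → χ a b = col


namespace AuxCliqueProof

open Finset

lemma ncard_biUnion_le {α β : Type*} (s : Finset α) (f : α → Set β) :
    (⋃ a ∈ s, f a).ncard ≤ ∑ a ∈ s, (f a).ncard := by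
  classical
  induction s using Finset.induction_on with
  | empty => simp
  | insert _ _ ha ih =>
    rename_i a s
    rw [Finset.set_biUnion_insert, Finset.sum_insert ha]
    exact le_trans (Set.ncard_union_le _ _) (by omega)

lemma ncard_biUnion_le_real {α β : Type*} (s : Finset α) (f : α → Set β)
    {N : ℝ} (hN : ∀ a ∈ s, ((f a).ncard : ℝ) ≤ N) (hN0 : 0 ≤ N) :
    ((⋃ a ∈ s, f a).ncard : ℝ) ≤ s.card * N := by
  calc ((⋃ a ∈ s, f a).ncard : ℝ) ≤ ((∑ a ∈ s, (f a).ncard : ℕ) : ℝ) := by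
        exact_mod_cast ncard_biUnion_le s f
    _ = ∑ a ∈ s, ((f a).ncard : ℝ) := by push_cast; ring
    _ ≤ ∑ a ∈ s, N := Finset.sum_le_sum hN
    _ = s.card * N := by rw [Finset.sum_const, nsmul_eq_mul]

lemma fiber_ncard_le {α β : Type*} {A : Set α} {B : α → Set β} {C : Set (α × β)}
    (hA : A.Finite) (hB : ∀ a ∈ A, (B a).Finite)
    (hC : ∀ p ∈ C, p.1 ∈ A ∧ p.2 ∈ B p.1)
    {M N : ℝ} (hM : (A.ncard : ℝ) ≤ M) (hN : ∀ a ∈ A, ((B a).ncard : ℝ) ≤ N)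
    (hN0 : 0 ≤ N) :
    (C.ncard : ℝ) ≤ M * N := by
  classical
  have hsub : C ⊆ ⋃ a ∈ hA.toFinset, (fun b => (a, b)) '' (B a) := by
    intro p hp
    obtain ⟨h1, h2⟩ := hC p hp
    simp only [Set.mem_iUnion, Set.Finite.mem_toFinset]
    exact ⟨p.1, h1, p.2, h2, rfl⟩
  have hfin : (⋃ a ∈ hA.toFinset, (fun b => (a, b)) '' (B a)).Finite := by
    apply Set.Finite.biUnion (hA.toFinset.finite_toSet)
    intro a ha
    exact Set.Finite.image _ (hB a (hA.mem_toFinset.mp ha))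
  have h1 : (C.ncard : ℝ) ≤ ((⋃ a ∈ hA.toFinset, (fun b => (a, b)) '' (B a)).ncard : ℝ) := by
    exact_mod_cast Set.ncard_le_ncard hsub hfin
  have h2 : ((⋃ a ∈ hA.toFinset, (fun b => (a, b)) '' (B a)).ncard : ℝ)
      ≤ (hA.toFinset.card : ℝ) * N := by
    apply ncard_biUnion_le_real
    · intro a ha
      rw [Set.ncard_image_of_injOn (by intro x _ y _ h; exact (Prod.mk.injEq _ _ _ _).mp h |>.2)]
      exact hN a (hA.mem_toFinset.mp ha)
    · exact hN0
  have h3 : (hA.toFinset.card : ℝ) = (A.ncard : ℝ) := by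
    rw [Set.ncard_eq_toFinset_card A hA]
  have hM0 : (0:ℝ) ≤ M := le_trans (by positivity) hM
  calc (C.ncard : ℝ) ≤ (hA.toFinset.card : ℝ) * N := le_trans h1 h2
    _ = (A.ncard : ℝ) * N := by rw [h3]
    _ ≤ M * N := mul_le_mul_of_nonneg_right hM hN0



variable {V : Type*} [Fintype V] [DecidableEq V]

/-- The set of padded paths of length `i` starting at `x`. -/
def Aset (G : SimpleGraph V) (i : ℕ) (x : V) : Set (ℕ → V) :=
  {q | PathSeq G i q ∧ q 0 = x ∧ PadSeq i q}

lemma Aset_finite (G : SimpleGraph V) (i : ℕ) (x : V) : (Aset G i x).Finite := by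
  apply Set.Finite.of_finite_image (f := fun q (r : Fin (i+1)) => q r)
  · exact Set.Finite.subset (Set.finite_univ) (Set.subset_univ _)
  · intro q hq q' hq' h
    funext r
    by_cases hr : r ≤ i
    · exact congrFun h ⟨r, by omega⟩
    · have h1 := hq.2.2 r (by omega)
      have h2 := hq'.2.2 r (by omega)
      have h3 := congrFun h ⟨i, by omega⟩
      simp only at h3
      rw [h1, h2, h3]

lemma Aset_ncard_le (G : SimpleGraph V) {K δ : ℝ}
    (hmax : ∀ v : V, ((G.neighborSet v).ncard : ℝ) ≤ K * δ) (hΔ : 0 ≤ K * δ)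
    (i : ℕ) (x : V) : ((Aset G i x).ncard : ℝ) ≤ (K * δ) ^ i := by
  induction i generalizing x with
  | zero =>
    have hsub : Aset G 0 x ⊆ {fun _ => x} := by
      intro q hq
      have : ∀ r, q r = x := by
        intro r
        rcases Nat.eq_zero_or_pos r with h | h
        · rw [h, hq.2.1]
        · rw [hq.2.2 r (by omega), hq.2.1]
      simp only [Set.mem_singleton_iff]
      funext r; exact this r
    have := Set.ncard_le_ncard hsub (Set.finite_singleton _)
    rw [Set.ncard_singleton] at this
    calc ((Aset G 0 x).ncard : ℝ) ≤ 1 := by exact_mod_cast this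
      _ = (K * δ) ^ 0 := by norm_num
  | succ i ih =>
    set F : (ℕ → V) → (ℕ → V) × V :=
      fun q => ((fun r => if r ≤ i then q r else q i), q (i+1)) with hF
    have hinj : Set.InjOn F (Aset G (i+1) x) := by
      intro q hq q' hq' h
      have h1 : ∀ r, r ≤ i → q r = q' r := by
        intro r hr
        have := congrFun (congrArg Prod.fst h) r
        simpa [hF, if_pos hr] using this
      have h2 : q (i+1) = q' (i+1) := congrArg Prod.snd h
      funext r
      by_cases hr : r ≤ i
      · exact h1 r hr
      · by_cases hr' : r ≤ i + 1
        · have : r = i + 1 := by omega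
          rw [this]; exact h2
        · rw [hq.2.2 r (by omega), hq'.2.2 r (by omega)]
          exact h2
    have himg : ∀ p ∈ F '' (Aset G (i+1) x),
        p.1 ∈ Aset G i x ∧ p.2 ∈ G.neighborSet (p.1 i) := by
      rintro p ⟨q, hq, rfl⟩
      obtain ⟨⟨hadj, hdis⟩, hq0, hpad⟩ := hq
      refine ⟨⟨⟨?_, ?_⟩, ?_, ?_⟩, ?_⟩
      · intro r hr
        simp only [hF, if_pos (by omega : r ≤ i), if_pos (by omega : r + 1 ≤ i)]
        exact hadj r (by omega)
      · intro r r' hrr hr'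
        simp only [hF, if_pos (le_trans (le_of_lt hrr) hr'), if_pos hr']
        exact hdis r r' hrr (by omega)
      · simp only [hF, if_pos (by omega : (0:ℕ) ≤ i)]; exact hq0
      · intro r hr
        by_cases h : r ≤ i
        · have : r = i := by omega
          simp [hF, this]
        · simp [hF, if_neg h]
      · simp only [hF, if_pos (le_refl i), SimpleGraph.mem_neighborSet]
        exact hadj i (by omega)
    have heq : ((Aset G (i+1) x).ncard : ℝ) = ((F '' (Aset G (i+1) x)).ncard : ℝ) := by
      rw [Set.ncard_image_of_injOn hinj]
    rw [heq]
    calc ((F '' (Aset G (i+1) x)).ncard : ℝ) ≤ (K * δ) ^ i * (K * δ) := by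
          apply fiber_ncard_le (B := fun q => G.neighborSet (q i)) (Aset_finite G i x)
            (fun a _ => Set.toFinite _) himg (ih x)
            (fun a _ => hmax _) hΔ
      _ = (K * δ) ^ (i + 1) := by ring

/-- Paths of length `i` from `x` passing through `s` at position `r` (`1 ≤ r ≤ i`). -/
lemma Aset_fix_ncard_le (G : SimpleGraph V) {K δ : ℝ}
    (hmax : ∀ v : V, ((G.neighborSet v).ncard : ℝ) ≤ K * δ) (hΔ : 0 ≤ K * δ)
    (i : ℕ) (x s : V) (r : ℕ) (hr1 : 1 ≤ r) (hr2 : r ≤ i) :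
    (({q ∈ Aset G i x | q r = s}).ncard : ℝ) ≤ (K * δ) ^ (i - 1) := by
  set F : (ℕ → V) → (ℕ → V) × (ℕ → V) :=
    fun q => ((fun a => if a ≤ r - 1 then q a else q (r-1)),
              (fun a => q (r + min a (i - r)))) with hF
  have hinj : Set.InjOn F {q ∈ Aset G i x | q r = s} := by
    intro q hq q' hq' h
    have h1 : ∀ a, a ≤ r - 1 → q a = q' a := by
      intro a ha
      have := congrFun (congrArg Prod.fst h) a
      simpa [hF, if_pos ha] using this
    have h2 : ∀ a, q (r + min a (i - r)) = q' (r + min a (i - r)) :=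
      fun a => congrFun (congrArg Prod.snd h) a
    funext a
    by_cases ha : a ≤ r - 1
    · exact h1 a ha
    · by_cases ha' : a ≤ i
      · have := h2 (a - r)
        rwa [min_eq_left (by omega), (by omega : r + (a - r) = a)] at this
      · rw [hq.1.2.2 a (by omega), hq'.1.2.2 a (by omega)]
        have := h2 (i - r)
        rwa [min_self, (by omega : r + (i - r) = i)] at this
  have himg : ∀ p ∈ F '' {q ∈ Aset G i x | q r = s},
      p.1 ∈ Aset G (r-1) x ∧ p.2 ∈ Aset G (i-r) s := by
    rintro p ⟨q, hq, rfl⟩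
    obtain ⟨⟨⟨hadj, hdis⟩, hq0, hpad⟩, hqr⟩ := hq
    constructor
    · refine ⟨⟨?_, ?_⟩, ?_, ?_⟩
      · intro a ha
        simp only [hF, if_pos (by omega : a ≤ r - 1), if_pos (by omega : a + 1 ≤ r - 1)]
        exact hadj a (by omega)
      · intro a b hab hb
        simp only [hF, if_pos (by omega : a ≤ r - 1), if_pos (by omega : b ≤ r - 1)]
        exact hdis a b hab (by omega)
      · simp only [hF, if_pos (by omega : (0:ℕ) ≤ r - 1)]; exact hq0
      · intro a ha
        by_cases h' : a ≤ r - 1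
        · have : a = r - 1 := by omega
          simp [hF, this]
        · simp [hF, if_neg h']
    · refine ⟨⟨?_, ?_⟩, ?_, ?_⟩
      · intro a ha
        simp only [hF]
        rw [min_eq_left (by omega), min_eq_left (by omega)]
        exact hadj (r + a) (by omega)
      · intro a b hab hb
        simp only [hF]
        rw [min_eq_left (by omega), min_eq_left (by omega)]
        exact hdis (r + a) (r + b) (by omega) (by omega)
      · simp only [hF]
        rw [(by omega : min 0 (i - r) = 0), Nat.add_zero]
        exact hqr
      · intro a ha
        simp only [hF]
        rw [min_eq_right (by omega), min_eq_left (le_refl _)]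
  have heq : (({q ∈ Aset G i x | q r = s}).ncard : ℝ)
      = ((F '' {q ∈ Aset G i x | q r = s}).ncard : ℝ) := by
    rw [Set.ncard_image_of_injOn hinj]
  rw [heq]
  calc ((F '' {q ∈ Aset G i x | q r = s}).ncard : ℝ)
      ≤ (K * δ) ^ (r - 1) * (K * δ) ^ (i - r) := by
        apply fiber_ncard_le (Aset_finite G (r-1) x) (fun a _ => Aset_finite G (i-r) s)
          himg (Aset_ncard_le G hmax hΔ (r-1) x) (fun a _ => Aset_ncard_le G hmax hΔ (i-r) s)
          (by positivity)
    _ = (K * δ) ^ (i - 1) := by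
        rw [← pow_add]
        congr 1
        omega

lemma middle_pick (G : SimpleGraph V) {m₀ N : ℕ} {u w : V}
    (hmd : ManyDisjointPaths G m₀ u w N) (T : Finset V) (hT : T.card < N) :
    ∃ M : ℕ → V, PathSeq G m₀ M ∧ M 0 = u ∧ M m₀ = w ∧
      ∀ r, 0 < r → r < m₀ → M r ∉ T := by
  classical
  obtain ⟨P, hP1, _, hP3⟩ := hmd
  by_contra hcon
  push_neg at hcon
  have hbad := fun a : Fin N => hcon (P a) (hP1 a).1 (hP1 a).2.1 (hP1 a).2.2
  choose rf h0 hm hTmem using hbad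
  have hinj : Set.InjOn (fun a : Fin N => P a (rf a)) ↑(Finset.univ : Finset (Fin N)) := by
    intro a _ b _ hab
    by_contra hne
    exact hP3 a b hne (rf a) (rf b) (h0 a) (hm a) (h0 b) (hm b) hab
  have hcard := Finset.card_le_card_of_injOn (fun a : Fin N => P a (rf a))
    (fun a _ => hTmem a) hinj
  simp only [Finset.card_univ, Fintype.card_fin] at hcard
  omega

lemma pathseq_reverse (G : SimpleGraph V) (n : ℕ) (p : ℕ → V) (hp : PathSeq G n p) :
    PathSeq G n (fun r => p (n - r)) := by
  constructor
  · intro r hr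
    simp only
    have h1 : n - r = (n - (r+1)) + 1 := by omega
    rw [h1]
    exact (hp.1 (n - (r+1)) (by omega)).symm
  · intro a b hab hb
    simp only
    exact (hp.2 (n - b) (n - a) (by omega) (by omega)).symm

set_option maxHeartbeats 2000000 in
lemma good_pair_exists (G : SimpleGraph V) (k h : ℕ) (hk : 1 ≤ k) {K δ : ℝ}
    (hK : 0 < K) (hδ : 0 < δ)
    (hmax : ∀ v : V, ((G.neighborSet v).ncard : ℝ) ≤ K * δ)
    (i j : ℕ) (hi : i < k) (hj : j < k) (x y : V)
    (hr : Rich G k h K δ i j x y)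
    (S : Finset V) (hx : x ∈ S) (hy : y ∈ S) (hS : S.card ≤ h) :
    ∃ P Q : ℕ → V, PathSeq G i P ∧ P 0 = x ∧ PathSeq G j Q ∧ Q 0 = y ∧
      ManyDisjointPaths G (2 * k - i - j) (P i) (Q j) ((h + 2) * (2 * k + 1) + 1) ∧
      (∀ r, 1 ≤ r → r ≤ i → P r ∉ S) ∧ (∀ r, 1 ≤ r → r ≤ j → Q r ∉ S) ∧
      ∀ r r', r ≤ i → r' ≤ j → P r ≠ Q r' := by
  classical
  obtain ⟨hxy, hcount⟩ := hr
  have hΔ : (0:ℝ) < K * δ := mul_pos hK hδ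
  set RS : Set ((ℕ → V) × (ℕ → V)) := {PQ : (ℕ → V) × (ℕ → V) |
      PathSeq G i PQ.1 ∧ PQ.1 0 = x ∧ PadSeq i PQ.1 ∧
      PathSeq G j PQ.2 ∧ PQ.2 0 = y ∧ PadSeq j PQ.2 ∧
      ManyDisjointPaths G (2 * k - i - j) (PQ.1 i) (PQ.2 j)
        ((h + 2) * (2 * k + 1) + 1)} with hRSdef
  have hmem : ∀ PQ ∈ RS, PQ.1 ∈ Aset G i x ∧ PQ.2 ∈ Aset G j y := by
    rintro PQ ⟨a, b, c, d, e, f, -⟩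
    exact ⟨⟨a, b, c⟩, ⟨d, e, f⟩⟩
  have hRSfin : RS.Finite := by
    apply Set.Finite.subset ((Aset_finite G i x).prod (Aset_finite G j y))
    intro PQ hPQ
    exact Set.mem_prod.mpr (hmem PQ hPQ)
  set GS : Set ((ℕ → V) × (ℕ → V)) := {PQ ∈ RS | (∀ r, 1 ≤ r → r ≤ i → PQ.1 r ∉ S) ∧
      (∀ r, 1 ≤ r → r ≤ j → PQ.2 r ∉ S) ∧
      ∀ r r', r ≤ i → r' ≤ j → PQ.1 r ≠ PQ.2 r'} with hGSdef
  have hGSne : GS.Nonempty := by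
    by_cases hij : i + j = 0
    · have hi0 : i = 0 := by omega
      have hj0 : j = 0 := by omega
      subst hi0; subst hj0
      have hRSne : RS.Nonempty := by
        apply Set.nonempty_of_ncard_ne_zero
        intro hzero
        rw [hzero] at hcount
        simp only [Nat.cast_zero] at hcount
        norm_num at hcount
      obtain ⟨PQ, hPQ⟩ := hRSne
      refine ⟨PQ, hPQ, fun r h1 h2 => by omega, fun r h1 h2 => by omega, ?_⟩
      intro r r' hr hr'
      have hr0 : r = 0 := by omega
      have hr'0 : r' = 0 := by omega
      rw [hr0, hr'0]
      obtain ⟨-, hP0, -, -, hQ0, -, -⟩ := hPQ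
      rw [hP0, hQ0]
      exact hxy
    · -- i + j ≥ 1
      by_contra hGSe
      rw [Set.not_nonempty_iff_eq_empty] at hGSe
      have hfail : ∀ PQ ∈ RS, ¬((∀ r, 1 ≤ r → r ≤ i → PQ.1 r ∉ S) ∧
          (∀ r, 1 ≤ r → r ≤ j → PQ.2 r ∉ S) ∧
          ∀ r r', r ≤ i → r' ≤ j → PQ.1 r ≠ PQ.2 r') := by
        intro PQ hPQ hg
        exact (Set.eq_empty_iff_forall_notMem.mp hGSe PQ) ⟨hPQ, hg⟩
      set U1 : Set ((ℕ → V) × (ℕ → V)) := ⋃ p ∈ (S ×ˢ Finset.Icc 1 i),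
        {PQ : (ℕ → V) × (ℕ → V) | PQ.1 ∈ {q ∈ Aset G i x | q p.2 = p.1} ∧
          PQ.2 ∈ Aset G j y} with hU1def
      set U2 : Set ((ℕ → V) × (ℕ → V)) := ⋃ p ∈ (S ×ˢ Finset.Icc 1 j),
        {PQ : (ℕ → V) × (ℕ → V) | PQ.1 ∈ Aset G i x ∧
          PQ.2 ∈ {q ∈ Aset G j y | q p.2 = p.1}} with hU2def
      set U3 : Set ((ℕ → V) × (ℕ → V)) := ⋃ p ∈ ((Finset.Icc 0 i) ×ˢ Finset.Icc 1 j),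
        {PQ : (ℕ → V) × (ℕ → V) | PQ.1 ∈ Aset G i x ∧
          PQ.2 ∈ {q ∈ Aset G j y | q p.2 = PQ.1 p.1}} with hU3def
      have hsub : RS ⊆ U1 ∪ (U2 ∪ U3) := by
        intro PQ hPQ
        obtain ⟨hP, hQ⟩ := hmem PQ hPQ
        by_cases hc1 : ∀ r, 1 ≤ r → r ≤ i → PQ.1 r ∉ S
        · by_cases hc2 : ∀ r, 1 ≤ r → r ≤ j → PQ.2 r ∉ S
          · have hc3 : ¬ ∀ r r', r ≤ i → r' ≤ j → PQ.1 r ≠ PQ.2 r' :=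
              fun hc3 => hfail PQ hPQ ⟨hc1, hc2, hc3⟩
            push_neg at hc3
            obtain ⟨r, r', hri, hrj, heq⟩ := hc3
            rcases Nat.eq_zero_or_pos r' with hr'0 | hr'pos
            · -- r' = 0, so PQ.1 r = y
              have hPry : PQ.1 r = y := by
                rw [heq, hr'0]
                exact hQ.2.1
              have hrpos : 0 < r := by
                by_contra hr0
                push_neg at hr0
                have : r = 0 := by omega
                rw [this] at hPry
                rw [hP.2.1] at hPry
                exact hxy hPry
              left
              simp only [hU1def, Set.mem_iUnion]
              refine ⟨(y, r), ?_, ⟨hP, hPry⟩, hQ⟩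
              simp only [Finset.mem_product, Finset.mem_Icc]
              exact ⟨hy, by omega, hri⟩
            · right; right
              simp only [hU3def, Set.mem_iUnion]
              refine ⟨(r, r'), ?_, hP, hQ, heq.symm⟩
              simp only [Finset.mem_product, Finset.mem_Icc]
              exact ⟨⟨by omega, hri⟩, hr'pos, hrj⟩
          · push_neg at hc2
            obtain ⟨r, h1, h2, h3⟩ := hc2
            right; left
            simp only [hU2def, Set.mem_iUnion]
            refine ⟨(PQ.2 r, r), ?_, hP, hQ, rfl⟩
            simp only [Finset.mem_product, Finset.mem_Icc]
            exact ⟨h3, h1, h2⟩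
        · push_neg at hc1
          obtain ⟨r, h1, h2, h3⟩ := hc1
          left
          simp only [hU1def, Set.mem_iUnion]
          refine ⟨(PQ.1 r, r), ?_, ⟨hP, rfl⟩, hQ⟩
          simp only [Finset.mem_product, Finset.mem_Icc]
          exact ⟨h3, h1, h2⟩
      -- finiteness of the unions
      have hfinterm : ∀ (W : Set ((ℕ → V) × (ℕ → V))),
          (∀ PQ ∈ W, PQ.1 ∈ Aset G i x ∧ PQ.2 ∈ Aset G j y) → W.Finite := by
        intro W hW
        apply Set.Finite.subset ((Aset_finite G i x).prod (Aset_finite G j y))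
        intro PQ hPQ
        exact Set.mem_prod.mpr (hW PQ hPQ)
      have hU1fin : U1.Finite := by
        apply Set.Finite.biUnion (Finset.finite_toSet _)
        intro p _
        exact hfinterm _ (fun PQ hPQ => ⟨hPQ.1.1, hPQ.2⟩)
      have hU2fin : U2.Finite := by
        apply Set.Finite.biUnion (Finset.finite_toSet _)
        intro p _
        exact hfinterm _ (fun PQ hPQ => ⟨hPQ.1, hPQ.2.1⟩)
      have hU3fin : U3.Finite := by
        apply Set.Finite.biUnion (Finset.finite_toSet _)
        intro p _
        exact hfinterm _ (fun PQ hPQ => ⟨hPQ.1, hPQ.2.1⟩)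
      -- counting
      have hcard1 : (((S ×ˢ Finset.Icc 1 i).card : ℕ) : ℝ) = (S.card : ℝ) * i := by
        rw [Finset.card_product, Nat.card_Icc, (by omega : i + 1 - 1 = i)]
        push_cast; ring
      have hU1c : (U1.ncard : ℝ) ≤ ((S.card : ℝ) * i) * (K * δ) ^ (i + j - 1) := by
        rw [hU1def, ← hcard1]
        apply ncard_biUnion_le_real (S ×ˢ Finset.Icc 1 i)
          (fun p => {PQ : (ℕ → V) × (ℕ → V) | PQ.1 ∈ {q ∈ Aset G i x | q p.2 = p.1} ∧
            PQ.2 ∈ Aset G j y}) ?_ (by positivity)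
        · intro p hp
          simp only [Finset.mem_product, Finset.mem_Icc] at hp
          have hterm : (({PQ : (ℕ → V) × (ℕ → V) | PQ.1 ∈ {q ∈ Aset G i x | q p.2 = p.1} ∧
              PQ.2 ∈ Aset G j y}).ncard : ℝ) ≤ (K * δ) ^ (i - 1) * (K * δ) ^ j := by
            apply fiber_ncard_le (B := fun _ => Aset G j y)
              (Set.Finite.subset (Aset_finite G i x) (Set.sep_subset _ _))
              (fun a _ => Aset_finite G j y) (fun PQ hPQ => hPQ)
              (Aset_fix_ncard_le G hmax (le_of_lt hΔ) i x p.1 p.2 hp.2.1 hp.2.2)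
              (fun a _ => Aset_ncard_le G hmax (le_of_lt hΔ) j y) (by positivity)
          calc _ ≤ (K * δ) ^ (i - 1) * (K * δ) ^ j := hterm
            _ = (K * δ) ^ (i + j - 1) := by
                rw [← pow_add]; congr 1; omega
      have hcard2 : (((S ×ˢ Finset.Icc 1 j).card : ℕ) : ℝ) = (S.card : ℝ) * j := by
        rw [Finset.card_product, Nat.card_Icc, (by omega : j + 1 - 1 = j)]
        push_cast; ring
      have hU2c : (U2.ncard : ℝ) ≤ ((S.card : ℝ) * j) * (K * δ) ^ (i + j - 1) := by
        rw [hU2def, ← hcard2]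
        apply ncard_biUnion_le_real (S ×ˢ Finset.Icc 1 j)
          (fun p => {PQ : (ℕ → V) × (ℕ → V) | PQ.1 ∈ Aset G i x ∧
            PQ.2 ∈ {q ∈ Aset G j y | q p.2 = p.1}}) ?_ (by positivity)
        · intro p hp
          simp only [Finset.mem_product, Finset.mem_Icc] at hp
          have hterm : (({PQ : (ℕ → V) × (ℕ → V) | PQ.1 ∈ Aset G i x ∧
              PQ.2 ∈ {q ∈ Aset G j y | q p.2 = p.1}}).ncard : ℝ)
              ≤ (K * δ) ^ i * (K * δ) ^ (j - 1) := by
            apply fiber_ncard_le (B := fun _ => {q ∈ Aset G j y | q p.2 = p.1})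
              (Aset_finite G i x)
              (fun a _ => Set.Finite.subset (Aset_finite G j y) (Set.sep_subset _ _))
              (fun PQ hPQ => hPQ)
              (Aset_ncard_le G hmax (le_of_lt hΔ) i x)
              (fun a _ => Aset_fix_ncard_le G hmax (le_of_lt hΔ) j y p.1 p.2 hp.2.1 hp.2.2)
              (by positivity)
          calc _ ≤ (K * δ) ^ i * (K * δ) ^ (j - 1) := hterm
            _ = (K * δ) ^ (i + j - 1) := by
                rw [← pow_add]; congr 1; omega
      have hcard3 : ((((Finset.Icc 0 i) ×ˢ Finset.Icc 1 j).card : ℕ) : ℝ)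
          = ((i : ℝ) + 1) * j := by
        rw [Finset.card_product, Nat.card_Icc, Nat.card_Icc,
          (by omega : j + 1 - 1 = j), (by omega : i + 1 - 0 = i + 1)]
        push_cast; ring
      have hU3c : (U3.ncard : ℝ) ≤ (((i : ℝ)+1) * j) * (K * δ) ^ (i + j - 1) := by
        rw [hU3def, ← hcard3]
        apply ncard_biUnion_le_real ((Finset.Icc 0 i) ×ˢ Finset.Icc 1 j)
          (fun p => {PQ : (ℕ → V) × (ℕ → V) | PQ.1 ∈ Aset G i x ∧
            PQ.2 ∈ {q ∈ Aset G j y | q p.2 = PQ.1 p.1}}) ?_ (by positivity)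
        · intro p hp
          simp only [Finset.mem_product, Finset.mem_Icc] at hp
          have hterm : (({PQ : (ℕ → V) × (ℕ → V) | PQ.1 ∈ Aset G i x ∧
              PQ.2 ∈ {q ∈ Aset G j y | q p.2 = PQ.1 p.1}}).ncard : ℝ)
              ≤ (K * δ) ^ i * (K * δ) ^ (j - 1) := by
            apply fiber_ncard_le (B := fun P => {q ∈ Aset G j y | q p.2 = P p.1})
              (Aset_finite G i x)
              (fun a _ => Set.Finite.subset (Aset_finite G j y) (Set.sep_subset _ _))
              (fun PQ hPQ => hPQ)
              (Aset_ncard_le G hmax (le_of_lt hΔ) i x)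
              (fun a _ => Aset_fix_ncard_le G hmax (le_of_lt hΔ) j y (a p.1) p.2 hp.2.1 hp.2.2)
              (by positivity)
          calc _ ≤ (K * δ) ^ i * (K * δ) ^ (j - 1) := hterm
            _ = (K * δ) ^ (i + j - 1) := by
                rw [← pow_add]; congr 1; omega
      -- combine
      have hchain : (RS.ncard : ℝ) ≤ ((U1.ncard : ℝ) + ((U2.ncard : ℝ) + (U3.ncard : ℝ))) := by
        have h1 : RS.ncard ≤ (U1 ∪ (U2 ∪ U3)).ncard :=
          Set.ncard_le_ncard hsub (hU1fin.union (hU2fin.union hU3fin))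
        have h2 : (U1 ∪ (U2 ∪ U3)).ncard ≤ U1.ncard + (U2 ∪ U3).ncard :=
          Set.ncard_union_le _ _
        have h3 : (U2 ∪ U3).ncard ≤ U2.ncard + U3.ncard := Set.ncard_union_le _ _
        push_cast
        have := le_trans h1 (le_trans h2 (by omega : U1.ncard + (U2 ∪ U3).ncard ≤ U1.ncard + (U2.ncard + U3.ncard)))
        exact_mod_cast this
      have hzexp : (K * δ) ^ ((i : ℤ) + (j : ℤ) - 1) = (K * δ) ^ (i + j - 1) := by
        have he : (i : ℤ) + (j : ℤ) - 1 = ((i + j - 1 : ℕ) : ℤ) := by omega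
        rw [he, zpow_natCast]
      rw [hzexp] at hcount
      have hkey : (S.card : ℝ) * i + (S.card : ℝ) * j + ((i : ℝ)+1) * j
          ≤ ((2 * (i + j) * h * (2 * k + 1) + 2 * (i + 1) * j : ℕ) : ℝ) := by
        have hnat : S.card * i + S.card * j + (i+1) * j
            ≤ 2 * (i + j) * h * (2 * k + 1) + 2 * (i + 1) * j := by
          have h1 : S.card * (i + j) ≤ h * (i + j) := Nat.mul_le_mul_right _ hS
          have h2 : h * (i + j) ≤ h * (i + j) * (2 * (2 * k + 1)) :=
            Nat.le_mul_of_pos_right _ (by omega)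
          have h3 : (i + 1) * j ≤ (i + 1) * j * 2 := Nat.le_mul_of_pos_right _ (by omega)
          calc S.card * i + S.card * j + (i+1) * j
              = S.card * (i + j) + (i + 1) * j := by ring
            _ ≤ h * (i + j) * (2 * (2 * k + 1)) + (i + 1) * j * 2 :=
                Nat.add_le_add (le_trans h1 h2) h3
            _ = 2 * (i + j) * h * (2 * k + 1) + 2 * (i + 1) * j := by ring
        exact_mod_cast hnat
      have hpow : (0:ℝ) ≤ (K * δ) ^ (i + j - 1) := by positivity
      have hfinal : (RS.ncard : ℝ)
          ≤ ((2 * (i + j) * h * (2 * k + 1) + 2 * (i + 1) * j : ℕ) : ℝ)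
            * (K * δ) ^ (i + j - 1) := by
        calc (RS.ncard : ℝ) ≤ (U1.ncard : ℝ) + ((U2.ncard : ℝ) + (U3.ncard : ℝ)) := hchain
          _ ≤ ((S.card : ℝ) * i) * (K * δ) ^ (i + j - 1) + (((S.card : ℝ) * j) * (K * δ) ^ (i + j - 1)
              + (((i : ℝ)+1) * j) * (K * δ) ^ (i + j - 1)) := by
                gcongr
          _ = ((S.card : ℝ) * i + (S.card : ℝ) * j + ((i : ℝ)+1) * j)
              * (K * δ) ^ (i + j - 1) := by ring
          _ ≤ _ := mul_le_mul_of_nonneg_right hkey hpow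
      exact absurd hcount (not_lt.mpr hfinal)
  obtain ⟨PQ, hPQRS, hc1, hc2, hc3⟩ := hGSne
  obtain ⟨hPps, hP0, hPpad, hQps, hQ0, hQpad, hmd⟩ := hPQRS
  exact ⟨PQ.1, PQ.2, hPps, hP0, hQps, hQ0, hmd, hc1, hc2, hc3⟩

set_option maxHeartbeats 2000000 in
lemma rich_path (G : SimpleGraph V) (k h : ℕ) (hk : 1 ≤ k) {K δ : ℝ}
    (hK : 0 < K) (hδ : 0 < δ)
    (hmax : ∀ v : V, ((G.neighborSet v).ncard : ℝ) ≤ K * δ)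
    (i j : ℕ) (hi : i < k) (hj : j < k) (x y : V)
    (hr : Rich G k h K δ i j x y)
    (S : Finset V) (hx : x ∈ S) (hy : y ∈ S) (hS : S.card ≤ h) :
    ∃ R : ℕ → V, PathSeq G (2*k) R ∧ R 0 = x ∧ R (2*k) = y ∧
      ∀ r, 0 < r → r < 2*k → R r ∉ S := by
  classical
  have hxy : x ≠ y := hr.1
  obtain ⟨P, Q, hPps, hP0, hQps, hQ0, hmd, hc1, hc2, hc3⟩ :=
    good_pair_exists G k h hk hK hδ hmax i j hi hj x y hr S hx hy hS
  set m₀ := 2 * k - i - j with hm₀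
  have hm2 : 2 ≤ m₀ := by omega
  set T : Finset V := S ∪ (Finset.Icc 0 i).image P ∪ (Finset.Icc 0 j).image Q with hTdef
  have hPT : ∀ r, r ≤ i → P r ∈ T := by
    intro r hr
    apply Finset.mem_union_left
    apply Finset.mem_union_right
    exact Finset.mem_image.mpr ⟨r, Finset.mem_Icc.mpr ⟨by omega, hr⟩, rfl⟩
  have hQT : ∀ r, r ≤ j → Q r ∈ T := by
    intro r hr
    apply Finset.mem_union_right
    exact Finset.mem_image.mpr ⟨r, Finset.mem_Icc.mpr ⟨by omega, hr⟩, rfl⟩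
  have hST : ∀ s ∈ S, s ∈ T := fun s hs =>
    Finset.mem_union_left _ (Finset.mem_union_left _ hs)
  have hTcard : T.card < (h + 2) * (2 * k + 1) + 1 := by
    have h1 : T.card ≤ S.card + (i + 1) + (j + 1) := by
      calc T.card ≤ (S ∪ (Finset.Icc 0 i).image P).card + ((Finset.Icc 0 j).image Q).card :=
            Finset.card_union_le _ _
        _ ≤ S.card + ((Finset.Icc 0 i).image P).card + ((Finset.Icc 0 j).image Q).card := by
            have := Finset.card_union_le S ((Finset.Icc 0 i).image P)
            omega
        _ ≤ S.card + (Finset.Icc 0 i).card + (Finset.Icc 0 j).card := by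
            have := Finset.card_image_le (s := Finset.Icc 0 i) (f := P)
            have := Finset.card_image_le (s := Finset.Icc 0 j) (f := Q)
            omega
        _ = S.card + (i + 1) + (j + 1) := by
            rw [Nat.card_Icc, Nat.card_Icc]
            omega
    have h2 : h ≤ h * (2 * k + 1) := Nat.le_mul_of_pos_right _ (by omega)
    have h3 : (h + 2) * (2 * k + 1) + 1 = h * (2 * k + 1) + 4 * k + 3 := by ring
    omega
  obtain ⟨M, hMps, hM0, hMm, hMT⟩ := middle_pick G hmd T hTcard
  -- assemble
  set R : ℕ → V := fun r => if r ≤ i then P r else if r ≤ 2 * k - j then M (r - i) else Q (2 * k - r) with hRdef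
  have hch1 : ∀ r, r ≤ i → R r = P r := by
    intro r hr
    simp [hRdef, if_pos hr]
  have hch2 : ∀ r, i ≤ r → r ≤ 2 * k - j → R r = M (r - i) := by
    intro r h1 h2
    by_cases hr : r ≤ i
    · have hre : r = i := by omega
      rw [hre, Nat.sub_self, hM0, hch1 i le_rfl]
    · simp [hRdef, if_neg hr, if_pos h2]
  have hch3 : ∀ r, 2 * k - j ≤ r → r ≤ 2 * k → R r = Q (2 * k - r) := by
    intro r h1 h2
    by_cases hr : r ≤ 2 * k - j
    · have hre : r = 2 * k - j := by omega
      rw [hre, hch2 (2 * k - j) (by omega) le_rfl, (by omega : 2 * k - j - i = m₀), hMm,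
        (by omega : 2 * k - (2 * k - j) = j)]
    · have hri : ¬ r ≤ i := by omega
      simp [hRdef, if_neg hri, if_neg hr]
  have hMint : ∀ s, 0 < s → s < m₀ → M s ∉ T := hMT
  -- distinctness
  have hdis : ∀ r1 r2, r1 < r2 → r2 ≤ 2 * k → R r1 ≠ R r2 := by
    intro r1 r2 hlt hle
    by_cases h1 : r1 ≤ i
    · rw [hch1 r1 h1]
      by_cases h2 : r2 ≤ i
      · rw [hch1 r2 h2]
        exact hPps.2 r1 r2 hlt h2
      · by_cases h2' : r2 ≤ 2 * k - j
        · by_cases h2e : r2 = 2 * k - j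
          · rw [hch3 r2 (by omega) hle, (by omega : 2 * k - r2 = j)]
            exact hc3 r1 j h1 le_rfl
          · rw [hch2 r2 (by omega) h2']
            intro heq
            exact hMint (r2 - i) (by omega) (by omega) (heq ▸ hPT r1 h1)
        · rw [hch3 r2 (by omega) hle]
          exact hc3 r1 (2 * k - r2) h1 (by omega)
    · by_cases h1' : r1 ≤ 2 * k - j
      · by_cases h1e : r1 = 2 * k - j
        · rw [hch3 r1 (by omega) (by omega), hch3 r2 (by omega) hle]
          intro heq
          have := hQps.2 (2 * k - r2) (2 * k - r1) (by omega) (by omega)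
          exact this heq.symm
        · rw [hch2 r1 (by omega) h1']
          by_cases h2' : r2 ≤ 2 * k - j
          · by_cases h2e : r2 = 2 * k - j
            · rw [hch3 r2 (by omega) hle, (by omega : 2 * k - r2 = j)]
              intro heq
              exact hMint (r1 - i) (by omega) (by omega) (heq ▸ hQT j le_rfl)
            · rw [hch2 r2 (by omega) h2']
              exact hMps.2 (r1 - i) (r2 - i) (by omega) (by omega)
          · rw [hch3 r2 (by omega) hle]
            intro heq
            exact hMint (r1 - i) (by omega) (by omega) (heq ▸ hQT (2 * k - r2) (by omega))
      · rw [hch3 r1 (by omega) (by omega), hch3 r2 (by omega) hle]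
        intro heq
        have := hQps.2 (2 * k - r2) (2 * k - r1) (by omega) (by omega)
        exact this heq.symm
  -- adjacency
  have hadjR : ∀ r, r < 2 * k → G.Adj (R r) (R (r + 1)) := by
    intro r hr
    by_cases h1 : r + 1 ≤ i
    · rw [hch1 r (by omega), hch1 (r+1) h1]
      exact hPps.1 r (by omega)
    · by_cases h2 : r + 1 ≤ 2 * k - j
      · rw [hch2 r (by omega) (by omega), hch2 (r+1) (by omega) h2,
          (by omega : r + 1 - i = (r - i) + 1)]
        exact hMps.1 (r - i) (by omega)
      · rw [hch3 r (by omega) (by omega), hch3 (r+1) (by omega) (by omega)]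
        have heq : 2 * k - r = (2 * k - (r + 1)) + 1 := by omega
        rw [heq]
        exact (hQps.1 (2 * k - (r + 1)) (by omega)).symm
  refine ⟨R, ⟨hadjR, hdis⟩, ?_, ?_, ?_⟩
  · rw [hch1 0 (by omega)]; exact hP0
  · rw [hch3 (2 * k) (by omega) le_rfl, (by omega : 2 * k - 2 * k = 0)]
    exact hQ0
  · intro r h0 h2k
    by_cases h1 : r ≤ i
    · rw [hch1 r h1]
      exact hc1 r (by omega) h1
    · by_cases h2 : r ≤ 2 * k - j
      · by_cases h2e : r = 2 * k - j
        · rw [hch3 r (by omega) (by omega), (by omega : 2 * k - r = j)]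
          exact hc2 j (by omega) le_rfl
        · rw [hch2 r (by omega) h2]
          intro hmem'
          exact hMint (r - i) (by omega) (by omega) (hST _ hmem')
      · rw [hch3 r (by omega) (by omega)]
        exact hc2 (2 * k - r) (by omega) (by omega)

lemma pick_path (G : SimpleGraph V) (k h : ℕ) (hk : 1 ≤ k) {K δ : ℝ}
    (hK : 0 < K) (hδ : 0 < δ)
    (hmax : ∀ v : V, ((G.neighborSet v).ncard : ℝ) ≤ K * δ)
    (x y : V)
    (hex : ∃ i j : ℕ, i < k ∧ j < k ∧
      (Rich G k h K δ i j x y ∨ Rich G k h K δ i j y x))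
    (S : Finset V) (hx : x ∈ S) (hy : y ∈ S) (hS : S.card ≤ h) :
    ∃ R : ℕ → V, PathSeq G (2*k) R ∧ R 0 = x ∧ R (2*k) = y ∧
      ∀ r, 0 < r → r < 2*k → R r ∉ S := by
  obtain ⟨i, j, hi, hj, hcase⟩ := hex
  rcases hcase with hr | hr
  · exact rich_path G k h hk hK hδ hmax i j hi hj x y hr S hx hy hS
  · obtain ⟨R', hps, h0, h2k, hint⟩ := rich_path G k h hk hK hδ hmax i j hi hj y x hr S hy hx hS
    refine ⟨fun r => R' (2 * k - r), pathseq_reverse G (2*k) R' hps, ?_, ?_, ?_⟩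
    · simp only [Nat.sub_zero]; exact h2k
    · simp only [Nat.sub_self]; exact h0
    · intro r hr1 hr2
      exact hint (2 * k - r) (by omega) (by omega)

lemma greedy (G : SimpleGraph V) (k t : ℕ) (hk : 1 ≤ k) (h : ℕ)
    (m : Fin t → Fin t → ℕ) (φ : Fin t → V) (v₀ : V)
    (hh : t + (2 * k - 1) * (∑ p : Fin t × Fin t, if p.1 < p.2 then m p.1 p.2 else 0) ≤ h)
    (hpick : ∀ a b : Fin t, a ≠ b → ∀ S : Finset V, φ a ∈ S → φ b ∈ S → S.card ≤ h →
      ∃ R : ℕ → V, PathSeq G (2 * k) R ∧ R 0 = φ a ∧ R (2 * k) = φ b ∧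
        ∀ r, 0 < r → r < 2 * k → R r ∉ S) :
    ∀ n : ℕ, ∀ m' : Fin t → Fin t → ℕ, (∀ a b, m' a b ≤ m a b) →
      (∑ p : Fin t × Fin t, if p.1 < p.2 then m' p.1 p.2 else 0) = n →
      ∃ (π : Fin t → Fin t → ℕ → (ℕ → V)) (T : Finset V),
        T.card ≤ (2 * k - 1) * n ∧ (∀ d, φ d ∉ T) ∧
        (∀ a b : Fin t, a < b → ∀ c, c < m' a b →
          PathSeq G (2 * k) (π a b c) ∧ π a b c 0 = φ a ∧ π a b c (2 * k) = φ b) ∧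
        (∀ a b : Fin t, a < b → ∀ c, c < m' a b → ∀ r, 0 < r → r < 2 * k → π a b c r ∈ T) ∧
        (∀ a b a' b' : Fin t, a < b → a' < b' → ∀ c c' : ℕ, c < m' a b → c' < m' a' b' →
          (a, b, c) ≠ (a', b', c') → ∀ r r', 0 < r → r < 2 * k → 0 < r' → r' < 2 * k →
            π a b c r ≠ π a' b' c' r') := by
  classical
  intro n
  induction n with
  | zero =>
    intro m' hle hsum
    have hz : ∀ a b : Fin t, a < b → m' a b = 0 := by
      intro a b hab
      have := (Finset.sum_eq_zero_iff.mp hsum) (a, b) (Finset.mem_univ _)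
      simpa [hab] using this
    refine ⟨fun _ _ _ _ => v₀, ∅, by simp, by simp, ?_, ?_, ?_⟩
    · intro a b hab c hc; rw [hz a b hab] at hc; omega
    · intro a b hab c hc; rw [hz a b hab] at hc; omega
    · intro a b a' b' hab _ c c' hc _ _ r r' _ _ _ _; rw [hz a b hab] at hc; omega
  | succ n ih =>
    intro m' hle hsum
    have hex : ∃ p : Fin t × Fin t, p.1 < p.2 ∧ 0 < m' p.1 p.2 := by
      by_contra hcon
      push_neg at hcon
      have hzz : (∑ p : Fin t × Fin t, if p.1 < p.2 then m' p.1 p.2 else 0) = 0 := by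
        apply Finset.sum_eq_zero
        intro p _
        by_cases hp : p.1 < p.2
        · simp only [if_pos hp]
          have := hcon p hp
          omega
        · simp [hp]
      omega
    obtain ⟨p₀, hp₀lt, hp₀pos⟩ := hex
    set a₀ := p₀.1 with ha₀def
    set b₀ := p₀.2 with hb₀def
    set m'' : Fin t → Fin t → ℕ :=
      fun a b => if a = a₀ ∧ b = b₀ then m' a b - 1 else m' a b with hm''def
    have hle'' : ∀ a b, m'' a b ≤ m a b := by
      intro a b
      by_cases hab : a = a₀ ∧ b = b₀
      · simp only [hm''def, if_pos hab]
        exact le_trans (Nat.sub_le _ _) (hle a b)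
      · simp only [hm''def, if_neg hab]
        exact hle a b
    have hsum'' : (∑ p : Fin t × Fin t, if p.1 < p.2 then m'' p.1 p.2 else 0) = n := by
      have e1 := Finset.add_sum_erase Finset.univ
        (fun p : Fin t × Fin t => if p.1 < p.2 then m'' p.1 p.2 else 0) (Finset.mem_univ p₀)
      have e2 := Finset.add_sum_erase Finset.univ
        (fun p : Fin t × Fin t => if p.1 < p.2 then m' p.1 p.2 else 0) (Finset.mem_univ p₀)
      have e3 : ∑ p ∈ Finset.univ.erase p₀, (if p.1 < p.2 then m'' p.1 p.2 else 0)
          = ∑ p ∈ Finset.univ.erase p₀, (if p.1 < p.2 then m' p.1 p.2 else 0) := by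
        apply Finset.sum_congr rfl
        intro p hp
        have hne : p ≠ p₀ := Finset.ne_of_mem_erase hp
        have hcond : ¬(p.1 = a₀ ∧ p.2 = b₀) := by
          rintro ⟨h1, h2⟩
          exact hne (Prod.ext h1 h2)
        by_cases hplt : p.1 < p.2
        · simp only [if_pos hplt, hm''def, if_neg hcond]
        · simp [hplt]
      have e4 : (if p₀.1 < p₀.2 then m'' p₀.1 p₀.2 else 0) = m' a₀ b₀ - 1 := by
        rw [if_pos hp₀lt]
        simp [hm''def, ha₀def, hb₀def]
      have e5 : (if p₀.1 < p₀.2 then m' p₀.1 p₀.2 else 0) = m' a₀ b₀ := by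
        rw [if_pos hp₀lt]
      rw [e3, e4] at e1
      rw [e5, hsum] at e2
      omega
    obtain ⟨π'', T'', hT''card, hT''φ, hπ''props, hπ''mem, hπ''dis⟩ := ih m'' hle'' hsum''
    set S : Finset V := T'' ∪ Finset.image φ Finset.univ with hSdef
    have hSa : φ a₀ ∈ S := Finset.mem_union_right _
      (Finset.mem_image.mpr ⟨a₀, Finset.mem_univ _, rfl⟩)
    have hSb : φ b₀ ∈ S := Finset.mem_union_right _
      (Finset.mem_image.mpr ⟨b₀, Finset.mem_univ _, rfl⟩)
    have hEn : n + 1 ≤ ∑ p : Fin t × Fin t, if p.1 < p.2 then m p.1 p.2 else 0 := by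
      rw [← hsum]
      apply Finset.sum_le_sum
      intro p _
      by_cases hp : p.1 < p.2
      · simp only [if_pos hp]; exact hle p.1 p.2
      · simp [hp]
    have hScard : S.card ≤ h := by
      have h1 : S.card ≤ T''.card + t := by
        calc S.card ≤ T''.card + (Finset.image φ Finset.univ).card :=
              Finset.card_union_le _ _
          _ ≤ T''.card + t := by
              have h2 : (Finset.image φ Finset.univ).card ≤ (Finset.univ : Finset (Fin t)).card :=
                Finset.card_image_le
              rw [Finset.card_univ, Fintype.card_fin] at h2
              omega
      have h3 : (2 * k - 1) * n ≤ (2 * k - 1) * (∑ p : Fin t × Fin t,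
          if p.1 < p.2 then m p.1 p.2 else 0) :=
        Nat.mul_le_mul_left _ (by omega)
      calc S.card ≤ T''.card + t := h1
        _ ≤ (2 * k - 1) * n + t := Nat.add_le_add_right hT''card t
        _ ≤ (2 * k - 1) * (∑ p : Fin t × Fin t, if p.1 < p.2 then m p.1 p.2 else 0) + t :=
            Nat.add_le_add_right h3 t
        _ = t + (2 * k - 1) * (∑ p : Fin t × Fin t, if p.1 < p.2 then m p.1 p.2 else 0) :=
            Nat.add_comm _ _
        _ ≤ h := hh
    obtain ⟨R, hRps, hR0, hR2k, hRint⟩ := hpick a₀ b₀ (Fin.ne_of_lt hp₀lt) S hSa hSb hScard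
    have hcase : ∀ a b : Fin t, ∀ c : ℕ, c < m' a b →
        ¬(a = a₀ ∧ b = b₀ ∧ c = m' a₀ b₀ - 1) → c < m'' a b := by
      intro a b c hc hnot
      by_cases h1 : a = a₀ ∧ b = b₀
      · have hcne : c ≠ m' a₀ b₀ - 1 := fun he => hnot ⟨h1.1, h1.2, he⟩
        rw [h1.1, h1.2] at hc
        have hmeq : m'' a b = m' a₀ b₀ - 1 := by
          simp only [hm''def, if_pos h1]
          rw [h1.1, h1.2]
        rw [hmeq]
        omega
      · simp only [hm''def, if_neg h1]
        exact hc
    refine ⟨fun a b c => if a = a₀ ∧ b = b₀ ∧ c = m' a₀ b₀ - 1 then R else π'' a b c,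
      T'' ∪ (Finset.Ioo 0 (2 * k)).image R, ?_, ?_, ?_, ?_, ?_⟩
    · -- cardinality
      have h1 : ((Finset.Ioo 0 (2 * k)).image R).card ≤ 2 * k - 1 := by
        have := Finset.card_image_le (s := Finset.Ioo 0 (2 * k)) (f := R)
        rw [Nat.card_Ioo] at this
        omega
      have h2 := Finset.card_union_le T'' ((Finset.Ioo 0 (2 * k)).image R)
      have h3 : (2 * k - 1) * (n + 1) = (2 * k - 1) * n + (2 * k - 1) := by ring
      omega
    · -- φ avoids T
      intro d hd
      rcases Finset.mem_union.mp hd with hd | hd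
      · exact hT''φ d hd
      · obtain ⟨r, hr, hre⟩ := Finset.mem_image.mp hd
        rw [Finset.mem_Ioo] at hr
        apply hRint r hr.1 hr.2
        rw [hre]
        exact Finset.mem_union_right _ (Finset.mem_image.mpr ⟨d, Finset.mem_univ _, rfl⟩)
    · -- path properties
      intro a b hab c hc
      by_cases hcc : a = a₀ ∧ b = b₀ ∧ c = m' a₀ b₀ - 1
      · simp only [if_pos hcc]
        exact ⟨hRps, by rw [hcc.1]; exact hR0, by rw [hcc.2.1]; exact hR2k⟩
      · simp only [if_neg hcc]
        exact hπ''props a b hab c (hcase a b c hc hcc)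
    · -- membership
      intro a b hab c hc r h0 h2k
      by_cases hcc : a = a₀ ∧ b = b₀ ∧ c = m' a₀ b₀ - 1
      · simp only [if_pos hcc]
        exact Finset.mem_union_right _
          (Finset.mem_image.mpr ⟨r, Finset.mem_Ioo.mpr ⟨h0, h2k⟩, rfl⟩)
      · simp only [if_neg hcc]
        exact Finset.mem_union_left _ (hπ''mem a b hab c (hcase a b c hc hcc) r h0 h2k)
    · -- disjointness
      intro a b a' b' hab ha'b' c c' hc hc' hne r r' h1 h2 h3 h4
      by_cases hcc : a = a₀ ∧ b = b₀ ∧ c = m' a₀ b₀ - 1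
      · by_cases hcc' : a' = a₀ ∧ b' = b₀ ∧ c' = m' a₀ b₀ - 1
        · exfalso
          apply hne
          rw [hcc.1, hcc.2.1, hcc.2.2, hcc'.1, hcc'.2.1, hcc'.2.2]
        · simp only [if_pos hcc, if_neg hcc']
          intro heq
          have hmem' := hπ''mem a' b' ha'b' c' (hcase a' b' c' hc' hcc') r' h3 h4
          apply hRint r h1 h2
          rw [heq]
          exact Finset.mem_union_left _ hmem'
      · by_cases hcc' : a' = a₀ ∧ b' = b₀ ∧ c' = m' a₀ b₀ - 1
        · simp only [if_neg hcc, if_pos hcc']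
          intro heq
          have hmem' := hπ''mem a b hab c (hcase a b c hc hcc) r h1 h2
          apply hRint r' h3 h4
          rw [← heq]
          exact Finset.mem_union_left _ hmem'
        · simp only [if_neg hcc, if_neg hcc']
          exact hπ''dis a b a' b' hab ha'b' c c' (hcase a b c hc hcc)
            (hcase a' b' c' hc' hcc') hne r r' h1 h2 h3 h4

end AuxCliqueProof

/-- **Lemma 4.4, first part.** Let `F` be a multigraph on `t` vertices,
`H = F^{2k-1}`, and let `G` have maximum degree at most `Kδ` and contain no copy of `H`.
Then for every vertex `v` and every `1 ≤ ℓ ≤ k`, the auxiliary graph `𝒢_ℓ(v)` (with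
richness parameters `k`, `h = |V(H)|`, `K`, `δ`) contains no clique on `t` vertices. -/
theorem aux_graph_is_clique_free
    {V : Type*} [Fintype V] [DecidableEq V] (G : SimpleGraph V)
    (t k : ℕ) (hk : 1 ≤ k)
    (m : Fin t → Fin t → ℕ) (hsymm : ∀ a b, m a b = m b a) (hirr : ∀ a, m a a = 0)
    (K δ : ℝ) (hK : 0 < K) (hδ : 0 < δ)
    (hmax : ∀ v : V, ((G.neighborSet v).ncard : ℝ) ≤ K * δ)
    (hHfree : ¬ ContainsMultiSubdiv G t m (2 * k))
    (v : V) (ℓ : Fin (k + 1)) (hℓ : 1 ≤ (ℓ : ℕ)) :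
    ¬ ∃ c : Fin t → (Fin (k + 1) → V),
        Function.Injective c ∧
        (∀ a, c a 0 = v ∧ ∀ s : Fin k, G.Adj (c a s.castSucc) (c a s.succ)) ∧
        (∀ a b, a ≠ b → AuxAdj G k (nH t k m) K δ ℓ (c a) (c b)) := by
  rintro ⟨c, hcinj, hwalk, hadj⟩
  classical
  set φ : Fin t → V := fun a => c a ℓ with hφdef
  have hℓ0 : ℓ ≠ 0 := by
    intro hz
    rw [hz] at hℓ
    simp at hℓ
  have hφne : ∀ a b, a ≠ b → φ a ≠ φ b := by
    intro a b hab
    exact (hadj a b hab).2.2.1 ℓ ℓ hℓ0 hℓ0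
  have hpick : ∀ a b : Fin t, a ≠ b → ∀ S : Finset V, φ a ∈ S → φ b ∈ S →
      S.card ≤ nH t k m →
      ∃ R : ℕ → V, PathSeq G (2 * k) R ∧ R 0 = φ a ∧ R (2 * k) = φ b ∧
        ∀ r, 0 < r → r < 2 * k → R r ∉ S := by
    intro a b hab S hSa hSb hScard
    obtain ⟨-, -, -, i, j, hi, hj, hcase⟩ := hadj a b hab
    exact AuxCliqueProof.pick_path G k (nH t k m) hk hK hδ hmax (φ a) (φ b)
      ⟨i, j, hi, hj, hcase⟩ S hSa hSb hScard
  have hh : t + (2 * k - 1) * (∑ p : Fin t × Fin t, if p.1 < p.2 then m p.1 p.2 else 0)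
      ≤ nH t k m := le_of_eq rfl
  obtain ⟨π, T, _, hTφ, hprops, hmem, hdis⟩ := AuxCliqueProof.greedy G k t hk (nH t k m) m φ v
    hh hpick (∑ p : Fin t × Fin t, if p.1 < p.2 then m p.1 p.2 else 0) m
    (fun a b => le_rfl) rfl
  apply hHfree
  refine ⟨φ, fun a b c' => π a b c'.val, ?_, ?_, ?_, ?_⟩
  · intro a b hab
    by_contra hne
    exact hφne a b hne hab
  · intro a b hab c'
    exact hprops a b hab c'.val c'.isLt
  · intro a b hab c' r h1 h2 d heq
    exact hTφ d (heq ▸ hmem a b hab c'.val c'.isLt r h1 h2)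
  · intro a b hab a' b' ha'b' c' c'' hne r r' h1 h2 h3 h4
    exact hdis a b a' b' hab ha'b' c'.val c''.val c'.isLt c''.isLt hne r r' h1 h2 h3 h4
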